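/- For every p ∈ Δ and every label j with p_j > 0, the JS loss converges to half the MAE loss as π1 → 1 from the left: lim_{π1 → 1^-} L_JS(p, e_j; π1) = 1 − p_j = (1/2)·Σ_{k=1}^c |p_k − (e_j)_k|. -/

import Mathlib

/-- Discrete Kullback–Leibler divergence `D(a ‖ b) = Σ_k a_k·log(a_k/b_k)`
(with the convention `0·log 0 = 0`, automatic since multiplication by `0`). -/
noncomputable def klDiv {c : ℕ} (a b : Fin c → ℝ) : ℝ :=
  ∑ k, a k * Real.log (a k / b k)

/-- The `j`-th standard one-hot vector `e_j`. -/
def oneHot {c : ℕ} (j : Fin c) : Fin c → ℝ :=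
  fun k => if k = j then 1 else 0

/-- The JS loss of a prediction `p` in the simplex against the one-hot label `e_j`,
with hyperparameters `π1 ∈ (0,1)` and `π2 = 1 − π1`:
`L_JS(p, e_j; π1) = (π1·D(e_j ‖ m) + π2·D(p ‖ m))/Z` where `m = π1·e_j + π2·p` and
`Z = −(1 − π1)·log(1 − π1)`. -/
noncomputable def jsLoss {c : ℕ} (p : Fin c → ℝ) (j : Fin c) (π1 : ℝ) : ℝ :=
  (π1 * klDiv (oneHot j) (fun k => π1 * oneHot j k + (1 - π1) * p k)
      + (1 - π1) * klDiv p (fun k => π1 * oneHot j k + (1 - π1) * p k))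
    / (-(1 - π1) * Real.log (1 - π1))

lemma log_lin_slope (q : ℝ) :
    Filter.Tendsto (fun ε : ℝ => Real.log (1 - ε * q) / ε)
      (nhdsWithin 0 (Set.Ioi 0)) (nhds (-q)) := by
  have h1 : HasDerivAt (fun ε : ℝ => Real.log (1 - ε * q)) (-q) 0 := by
    have hinner : HasDerivAt (fun ε : ℝ => 1 - ε * q) (-q) 0 := by
      simpa using ((hasDerivAt_id (0:ℝ)).mul_const q).const_sub 1
    have := (Real.hasDerivAt_log (by norm_num : (1:ℝ) - 0 * q ≠ 0)).comp 0 hinner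
    simp at this
    exact this
  have h2 := hasDerivAt_iff_tendsto_slope.mp h1
  have h3 : nhdsWithin (0:ℝ) (Set.Ioi 0) ≤ nhdsWithin 0 {(0:ℝ)}ᶜ :=
    nhdsWithin_mono _ (fun x hx => ne_of_gt hx)
  refine (h2.mono_left h3).congr (fun ε => ?_)
  simp [slope_def_field]

lemma tendsto_one_sub : Filter.Tendsto (fun π1 : ℝ => 1 - π1)
    (nhdsWithin 1 (Set.Iio 1)) (nhdsWithin 0 (Set.Ioi 0)) := by
  apply tendsto_nhdsWithin_of_tendsto_nhds_of_eventually_within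
  · have : Filter.Tendsto (fun π1 : ℝ => 1 - π1) (nhds 1) (nhds (1 - 1)) :=
      (continuous_const.sub continuous_id).tendsto 1
    simpa using this.mono_left nhdsWithin_le_nhds
  · filter_upwards [self_mem_nhdsWithin] with x hx
    simpa using hx

/-- For every `p` in the probability simplex and every label `j` with
`p_j > 0`, the JS loss converges to half the MAE loss as `π1 → 1` from the left:
`lim_{π1 → 1^-} L_JS(p, e_j; π1) = 1 − p_j = (1/2)·Σ_k |p_k − (e_j)_k|.` -/
theorem jsLoss_tendsto_halfMAE (c : ℕ) (hc : 2 ≤ c)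
    (p : Fin c → ℝ) (hp0 : ∀ i, 0 ≤ p i) (hp1 : ∑ i, p i = 1)
    (j : Fin c) (hpj : 0 < p j) :
    Filter.Tendsto (fun π1 : ℝ => jsLoss p j π1) (nhdsWithin 1 (Set.Iio 1))
        (nhds (1 - p j)) ∧
      1 - p j = (1 / 2) * ∑ k, |p k - oneHot j k| := by
  have hpj1 : p j ≤ 1 := by
    calc p j ≤ ∑ i, p i := Finset.single_le_sum (fun i _ => hp0 i) (Finset.mem_univ j)
    _ = 1 := hp1
  have hsumne : ∑ k ∈ Finset.univ \ {j}, p k = 1 - p j := by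
    have h := Finset.sum_eq_sum_sdiff_singleton_add (Finset.mem_univ j) p
    rw [hp1] at h
    linarith
  constructor
  · -- the limit
    set q : ℝ := 1 - p j with hq
    set F : ℝ → ℝ := fun π1 =>
      π1 * (Real.log (1 - (1 - π1) * q) / (1 - π1)) * (Real.log (1 - π1))⁻¹
      - p j * Real.log (p j / (1 - (1 - π1) * q)) * (Real.log (1 - π1))⁻¹
      + (1 - p j) with hF
    have hinv : Filter.Tendsto (fun π1 : ℝ => (Real.log (1 - π1))⁻¹)
        (nhdsWithin 1 (Set.Iio 1)) (nhds 0) := by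
      have hlog : Filter.Tendsto (fun π1 : ℝ => Real.log (1 - π1))
          (nhdsWithin 1 (Set.Iio 1)) Filter.atBot :=
        Real.tendsto_log_nhdsGT_zero.comp tendsto_one_sub
      have hlog' : Filter.Tendsto (fun π1 : ℝ => -Real.log (1 - π1))
          (nhdsWithin 1 (Set.Iio 1)) Filter.atTop :=
        Filter.tendsto_neg_atBot_atTop.comp hlog
      have h2 := hlog'.inv_tendsto_atTop
      have h3 : Filter.Tendsto (fun π1 : ℝ => -(-Real.log (1 - π1))⁻¹)
          (nhdsWithin 1 (Set.Iio 1)) (nhds (-0)) := (h2.neg : _)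
      simpa [inv_neg] using h3
    have hslope : Filter.Tendsto
        (fun π1 : ℝ => Real.log (1 - (1 - π1) * q) / (1 - π1))
        (nhdsWithin 1 (Set.Iio 1)) (nhds (-q)) :=
      (log_lin_slope q).comp tendsto_one_sub
    have hid : Filter.Tendsto (fun π1 : ℝ => π1) (nhdsWithin 1 (Set.Iio 1)) (nhds 1) :=
      Filter.tendsto_id.mono_left nhdsWithin_le_nhds
    have hA : Filter.Tendsto
        (fun π1 : ℝ => π1 * (Real.log (1 - (1 - π1) * q) / (1 - π1))
          * (Real.log (1 - π1))⁻¹)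
        (nhdsWithin 1 (Set.Iio 1)) (nhds 0) := by
      have := (hid.mul hslope).mul hinv
      simpa using this
    have hBin : Filter.Tendsto (fun π1 : ℝ => Real.log (p j / (1 - (1 - π1) * q)))
        (nhdsWithin 1 (Set.Iio 1)) (nhds (Real.log (p j))) := by
      have hcont : ContinuousAt (fun π1 : ℝ => Real.log (p j / (1 - (1 - π1) * q))) 1 := by
        have hin : ContinuousAt (fun π1 : ℝ => p j / (1 - (1 - π1) * q)) 1 := by
          apply ContinuousAt.div
          · exact continuousAt_const
          · fun_prop
          · norm_num
        have hval : p j / (1 - (1 - (1:ℝ)) * q) = p j := by norm_num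
        have := (Real.continuousAt_log (by rw [hval]; exact ne_of_gt hpj)).comp hin
        exact this
      have := hcont.tendsto.mono_left (nhdsWithin_le_nhds :
        nhdsWithin (1:ℝ) (Set.Iio 1) ≤ nhds 1)
      simpa using this
    have hB : Filter.Tendsto
        (fun π1 : ℝ => p j * Real.log (p j / (1 - (1 - π1) * q))
          * (Real.log (1 - π1))⁻¹)
        (nhdsWithin 1 (Set.Iio 1)) (nhds 0) := by
      have := ((tendsto_const_nhds (x := p j)).mul hBin).mul hinv
      simpa using this
    have hFlim : Filter.Tendsto F (nhdsWithin 1 (Set.Iio 1)) (nhds (1 - p j)) := by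
      have := (hA.sub hB).add (tendsto_const_nhds (x := (1 - p j)))
      simpa using this
    refine hFlim.congr' ?_
    have hIoo : Set.Ioo (0:ℝ) 1 ∈ nhdsWithin (1:ℝ) (Set.Iio 1) :=
      Ioo_mem_nhdsLT_of_mem (by constructor <;> norm_num)
    filter_upwards [hIoo] with π1 hπ
    obtain ⟨hπ0, hπ1⟩ := hπ
    have hε0 : 0 < 1 - π1 := by linarith
    have hε1 : 1 - π1 < 1 := by linarith
    have hεne : (1 - π1) ≠ 0 := ne_of_gt hε0
    have hlogneg : Real.log (1 - π1) < 0 := Real.log_neg hε0 hε1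
    have hlogne : Real.log (1 - π1) ≠ 0 := ne_of_lt hlogneg
    have hMeq : π1 * 1 + (1 - π1) * p j = 1 - (1 - π1) * q := by rw [hq]; ring
    have hK1 : klDiv (oneHot j) (fun k => π1 * oneHot j k + (1 - π1) * p k)
        = -Real.log (1 - (1 - π1) * q) := by
      unfold klDiv oneHot
      rw [Finset.sum_eq_single j]
      · beta_reduce
        rw [if_pos rfl, hMeq, one_mul, one_div, Real.log_inv]
      · intro k _ hk
        simp [hk]
      · intro h; exact absurd (Finset.mem_univ j) h
    have hK2 : klDiv p (fun k => π1 * oneHot j k + (1 - π1) * p k)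
        = p j * Real.log (p j / (1 - (1 - π1) * q))
          + (1 - p j) * (-Real.log (1 - π1)) := by
      unfold klDiv oneHot
      rw [Finset.sum_eq_sum_sdiff_singleton_add (Finset.mem_univ j)]
      have hterm : ∀ k ∈ Finset.univ \ {j},
          p k * Real.log (p k / (π1 * (if k = j then 1 else 0) + (1 - π1) * p k))
            = p k * (-Real.log (1 - π1)) := by
        intro k hk
        have hkj : k ≠ j := by simpa using (Finset.mem_sdiff.mp hk).2
        rw [if_neg hkj]
        rcases eq_or_lt_of_le (hp0 k) with h0 | h0
        · simp [← h0]
        · have : p k / (π1 * 0 + (1 - π1) * p k) = (1 - π1)⁻¹ := by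
            rw [mul_zero, zero_add]
            rw [div_eq_iff (by positivity : (1 - π1) * p k ≠ 0)]
            field_simp
          rw [this, Real.log_inv]
      rw [Finset.sum_congr rfl hterm, ← Finset.sum_mul, hsumne]
      beta_reduce
      rw [if_pos rfl, hMeq]
      ring
    have hden : -(1 - π1) * Real.log (1 - π1) ≠ 0 :=
      mul_ne_zero (neg_ne_zero.mpr hεne) hlogne
    rw [jsLoss, hK1, hK2, hF]
    beta_reduce
    rw [eq_div_iff hden]
    field_simp
    ring
  · -- the MAE identity
    have : ∑ k, |p k - oneHot j k|
        = ∑ k ∈ Finset.univ \ {j}, |p k - oneHot j k| + |p j - oneHot j j| :=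
      Finset.sum_eq_sum_sdiff_singleton_add (Finset.mem_univ j) _
    rw [this]
    have h1 : ∑ k ∈ Finset.univ \ {j}, |p k - oneHot j k|
        = ∑ k ∈ Finset.univ \ {j}, p k := by
      apply Finset.sum_congr rfl
      intro k hk
      have hkj : k ≠ j := by simpa using (Finset.mem_sdiff.mp hk).2
      rw [oneHot, if_neg hkj, sub_zero, abs_of_nonneg (hp0 k)]
    have h2 : |p j - oneHot j j| = 1 - p j := by
      rw [oneHot, if_pos rfl, abs_of_nonpos (by linarith), neg_sub]
    rw [h1, h2, hsumne]
    ring
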